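/- arXiv:2509.02410 — 2 statements merged into one kernel-verified Lean document; each statement's English description precedes it below -/
import Mathlib

section
/- Let ε₁, ε₂ be independent Rademacher random variables and let W₂ be the set of pairs (a, b) of nonnegative reals with a² + b² = 1. Then sup over (a,b) ∈ W₂ of P(a ε₁ + b ε₂ ≥ t) equals 1/2 if 0 < t ≤ 1, equals 1/4 if 1 < t ≤ √2, and equals 0 if t > √2. -/
open MeasureTheory Real Finset

theorem stmt_6 {Ω : Type*} {m0 : MeasurableSpace Ω} (μ : Measure Ω) [IsProbabilityMeasure μ]
     (ε : Fin 2 → Ω → ℝ)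
    (hmeas : ∀ i, Measurable (ε i))
    (hdist : ∀ i, μ {ω | ε i ω = 1} = 1/2 ∧ μ {ω | ε i ω = -1} = 1/2)
    (hindep : ProbabilityTheory.iIndepFun ε μ)
    (t : ℝ) :
    (0 < t → t ≤ 1 →
      (⨆ p ∈ {p : ℝ × ℝ | 0 ≤ p.1 ∧ 0 ≤ p.2 ∧ p.1 ^ 2 + p.2 ^ 2 = 1},
        μ {ω | t ≤ p.1 * ε 0 ω + p.2 * ε 1 ω}) = 1/2) ∧
    (1 < t → t ≤ Real.sqrt 2 →
      (⨆ p ∈ {p : ℝ × ℝ | 0 ≤ p.1 ∧ 0 ≤ p.2 ∧ p.1 ^ 2 + p.2 ^ 2 = 1},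
        μ {ω | t ≤ p.1 * ε 0 ω + p.2 * ε 1 ω}) = 1/4) ∧
    (Real.sqrt 2 < t →
      (⨆ p ∈ {p : ℝ × ℝ | 0 ≤ p.1 ∧ 0 ≤ p.2 ∧ p.1 ^ 2 + p.2 ^ 2 = 1},
        μ {ω | t ≤ p.1 * ε 0 ω + p.2 * ε 1 ω}) = 0) := by
  -- null set where some ε is not ±1
  have hnull : ∀ i, μ {ω | ¬(ε i ω = 1 ∨ ε i ω = -1)} = 0 := by
    intro i
    have hm : MeasurableSet (ε i ⁻¹' ({1, -1} : Set ℝ)) :=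
      (hmeas i) (by measurability)
    have heq : (ε i ⁻¹' ({1, -1} : Set ℝ)) = {ω | ε i ω = 1} ∪ {ω | ε i ω = -1} := by
      ext ω; simp [Set.mem_preimage]
    have h2 : μ (ε i ⁻¹' ({1, -1} : Set ℝ)) = 1 := by
      rw [heq, measure_union ?_
        (show MeasurableSet {ω | ε i ω = -1} from (hmeas i) (measurableSet_singleton (-1))),
        (hdist i).1, (hdist i).2]
      · rw [show (1:ENNReal)/2 = 2⁻¹ by simp, ← two_mul, ENNReal.mul_inv_cancel] <;> norm_num
      · rw [Set.disjoint_left]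
        intro ω h1 h2
        simp only [Set.mem_setOf_eq] at h1 h2
        rw [h1] at h2; norm_num at h2
    have heqc : {ω | ¬(ε i ω = 1 ∨ ε i ω = -1)} = (ε i ⁻¹' ({1, -1} : Set ℝ))ᶜ := by
      ext ω; simp [Set.mem_preimage]
    rw [heqc, measure_compl hm (measure_ne_top μ _), h2, measure_univ, tsub_self]
  set N : Set Ω := {ω | ¬(ε 0 ω = 1 ∨ ε 0 ω = -1)} ∪ {ω | ¬(ε 1 ω = 1 ∨ ε 1 ω = -1)} with hN
  have hNnull : μ N = 0 := by
    apply le_antisymm _ (by positivity)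
    calc μ N ≤ μ {ω | ¬(ε 0 ω = 1 ∨ ε 0 ω = -1)} + μ {ω | ¬(ε 1 ω = 1 ∨ ε 1 ω = -1)} :=
          measure_union_le _ _
      _ = 0 := by rw [hnull 0, hnull 1]; norm_num
  -- generic upper bound via subset-up-to-null
  have hub : ∀ (a b : ℝ) (B : Set Ω),
      (∀ ω, t ≤ a * ε 0 ω + b * ε 1 ω → (ε 0 ω = 1 ∨ ε 0 ω = -1) →
        (ε 1 ω = 1 ∨ ε 1 ω = -1) → ω ∈ B) →
      μ {ω | t ≤ a * ε 0 ω + b * ε 1 ω} ≤ μ B := by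
    intro a b B hsub
    have : {ω | t ≤ a * ε 0 ω + b * ε 1 ω} ⊆ B ∪ N := by
      intro ω hω
      by_cases h0 : ε 0 ω = 1 ∨ ε 0 ω = -1
      · by_cases h1 : ε 1 ω = 1 ∨ ε 1 ω = -1
        · exact Or.inl (hsub ω hω h0 h1)
        · exact Or.inr (Or.inr h1)
      · exact Or.inr (Or.inl h0)
    calc μ {ω | t ≤ a * ε 0 ω + b * ε 1 ω} ≤ μ (B ∪ N) := measure_mono this
      _ ≤ μ B + μ N := measure_union_le _ _
      _ = μ B := by rw [hNnull, add_zero]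
  -- the (1,1) event has measure 1/4
  have hind : ProbabilityTheory.IndepFun (ε 0) (ε 1) μ := hindep.indepFun (by decide)
  have hA : μ ({ω | ε 0 ω = 1} ∩ {ω | ε 1 ω = 1}) = 1/4 := by
    have h := hind.measure_inter_preimage_eq_mul {1} {1}
      (measurableSet_singleton 1) (measurableSet_singleton 1)
    have e0 : ε 0 ⁻¹' ({1} : Set ℝ) = {ω | ε 0 ω = 1} := by ext ω; simp
    have e1 : ε 1 ⁻¹' ({1} : Set ℝ) = {ω | ε 1 ω = 1} := by ext ω; simp
    rw [e0, e1, (hdist 0).1, (hdist 1).1] at h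
    rw [h, show (1:ENNReal)/2 * (1/2) = 1/4 from by
      rw [show (1:ENNReal)/2 = 2⁻¹ by simp, show (1:ENNReal)/4 = 4⁻¹ by simp,
        ← ENNReal.mul_inv] <;> norm_num]
  refine ⟨?_, ?_, ?_⟩
  · -- 0 < t ≤ 1 : sup = 1/2
    intro ht0 ht1
    apply le_antisymm
    · apply iSup₂_le
      rintro ⟨a, b⟩ ⟨ha, hb, hab⟩
      simp only at ha hb hab ⊢
      have ha1 : a ≤ 1 := by nlinarith
      have hb1 : b ≤ 1 := by nlinarith
      rcases le_total b a with hba | hba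
      · calc μ {ω | t ≤ a * ε 0 ω + b * ε 1 ω} ≤ μ {ω | ε 0 ω = 1} := by
              apply hub
              intro ω hω h0 h1
              rcases h0 with h0 | h0
              · exact h0
              · exfalso
                have hε1 : ε 1 ω ≤ 1 := by rcases h1 with h | h <;> rw [h] <;> norm_num
                rw [h0] at hω
                nlinarith
          _ = 1/2 := (hdist 0).1
      · calc μ {ω | t ≤ a * ε 0 ω + b * ε 1 ω} ≤ μ {ω | ε 1 ω = 1} := by
              apply hub
              intro ω hω h0 h1
              rcases h1 with h1 | h1
              · exact h1
              · exfalso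
                have hε0 : ε 0 ω ≤ 1 := by rcases h0 with h | h <;> rw [h] <;> norm_num
                rw [h1] at hω
                nlinarith
          _ = 1/2 := (hdist 1).1
    · have hmem : ((1:ℝ), (0:ℝ)) ∈ {p : ℝ × ℝ | 0 ≤ p.1 ∧ 0 ≤ p.2 ∧ p.1 ^ 2 + p.2 ^ 2 = 1} := by
        norm_num
      refine le_iSup₂_of_le ((1:ℝ), (0:ℝ)) hmem ?_
      have : {ω | ε 0 ω = 1} ⊆ {ω | t ≤ (1:ℝ) * ε 0 ω + (0:ℝ) * ε 1 ω} := by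
        intro ω hω
        simp only [Set.mem_setOf_eq] at hω ⊢
        rw [hω]; linarith
      calc (1:ENNReal)/2 = μ {ω | ε 0 ω = 1} := ((hdist 0).1).symm
        _ ≤ _ := measure_mono this
  · -- 1 < t ≤ √2 : sup = 1/4
    intro ht1 ht2
    apply le_antisymm
    · apply iSup₂_le
      rintro ⟨a, b⟩ ⟨ha, hb, hab⟩
      simp only at ha hb hab ⊢
      have ha1 : a ≤ 1 := by nlinarith
      have hb1 : b ≤ 1 := by nlinarith
      calc μ {ω | t ≤ a * ε 0 ω + b * ε 1 ω} ≤ μ ({ω | ε 0 ω = 1} ∩ {ω | ε 1 ω = 1}) := by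
            apply hub
            intro ω hω h0 h1
            have hε0 : ε 0 ω ≤ 1 := by rcases h0 with h | h <;> rw [h] <;> norm_num
            have hε1 : ε 1 ω ≤ 1 := by rcases h1 with h | h <;> rw [h] <;> norm_num
            constructor
            · rcases h0 with h | h
              · exact h
              · exfalso; rw [h] at hω; nlinarith
            · rcases h1 with h | h
              · exact h
              · exfalso; rw [h] at hω; nlinarith
        _ = 1/4 := hA
    · have hs : Real.sqrt 2 ^ 2 = 2 := Real.sq_sqrt (by norm_num)
      have hs0 : (0:ℝ) ≤ Real.sqrt 2 := Real.sqrt_nonneg 2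
      have hmem : ((Real.sqrt 2 / 2 : ℝ), (Real.sqrt 2 / 2 : ℝ)) ∈
          {p : ℝ × ℝ | 0 ≤ p.1 ∧ 0 ≤ p.2 ∧ p.1 ^ 2 + p.2 ^ 2 = 1} := by
        refine ⟨by positivity, by positivity, ?_⟩
        simp only
        nlinarith
      refine le_iSup₂_of_le ((Real.sqrt 2 / 2 : ℝ), (Real.sqrt 2 / 2 : ℝ)) hmem ?_
      have hsub : {ω | ε 0 ω = 1} ∩ {ω | ε 1 ω = 1} ⊆
          {ω | t ≤ Real.sqrt 2 / 2 * ε 0 ω + Real.sqrt 2 / 2 * ε 1 ω} := by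
        rintro ω ⟨h0, h1⟩
        simp only [Set.mem_setOf_eq] at h0 h1 ⊢
        rw [h0, h1]; linarith
      calc (1:ENNReal)/4 = μ ({ω | ε 0 ω = 1} ∩ {ω | ε 1 ω = 1}) := hA.symm
        _ ≤ _ := measure_mono hsub
  · -- √2 < t : sup = 0
    intro ht
    apply le_antisymm _ (by positivity)
    apply iSup₂_le
    rintro ⟨a, b⟩ ⟨ha, hb, hab⟩
    simp only at ha hb hab ⊢
    have habs : a + b ≤ Real.sqrt 2 := by
      nlinarith [Real.sq_sqrt (show (0:ℝ) ≤ 2 by norm_num), Real.sqrt_nonneg 2,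
        sq_nonneg (a - b), sq_nonneg (a + b - Real.sqrt 2)]
    have : μ {ω | t ≤ a * ε 0 ω + b * ε 1 ω} ≤ μ (∅ : Set Ω) := by
      apply hub
      intro ω hω h0 h1
      have hε0 : ε 0 ω ≤ 1 := by rcases h0 with h | h <;> rw [h] <;> norm_num
      have hε1 : ε 1 ω ≤ 1 := by rcases h1 with h | h <;> rw [h] <;> norm_num
      exfalso; nlinarith
    simpa using this
end

section
/- For n = 2 and every t > 0, the supremum over w ∈ W₂ of P(S₂(w) ≥ t) is attained and equals max(P(S₂(w^(1)) ≥ t), P(S₂(w^(2)) ≥ t)), where w^(1) = (1, 0) and w^(2) = (1/√2, 1/√2). -/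
open MeasureTheory Real Finset
open scoped ENNReal NNReal

lemma quarter_arith : (1/2:ℝ≥0∞) * (1/2) = 1/4 := by
  simp only [one_div]
  rw [← ENNReal.mul_inv (by norm_num) (by norm_num)]
  norm_num

lemma half_arith : (1/4:ℝ≥0∞) + 1/4 = 1/2 := by
  rw [ENNReal.div_add_div_same, ENNReal.div_eq_div_iff] <;> norm_num

lemma quarter_le_half : (1/4:ℝ≥0∞) ≤ 1/2 :=
  ENNReal.div_le_div_left (by norm_num) 1

lemma one_arith : (1/2:ℝ≥0∞) + 1/2 = 1 := by
  rw [ENNReal.div_add_div_same, ENNReal.div_eq_one_iff] <;> norm_num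

lemma key_measure {Ω : Type*} {m0 : MeasurableSpace Ω} (μ : Measure Ω) [IsProbabilityMeasure μ]
    (ε : Fin 2 → Ω → ℝ)
    (hmeas : ∀ i, Measurable (ε i))
    (hdist : ∀ i, μ {ω | ε i ω = 1} = 1/2 ∧ μ {ω | ε i ω = -1} = 1/2)
    (hindep : ProbabilityTheory.iIndepFun ε μ)
    (t w0 w1 : ℝ) :
    μ {ω | t ≤ w0 * ε 0 ω + w1 * ε 1 ω} =
      (if t ≤ w0 + w1 then (1/4:ℝ≥0∞) else 0) + (if t ≤ w0 - w1 then (1/4:ℝ≥0∞) else 0)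
      + (if t ≤ -w0 + w1 then (1/4:ℝ≥0∞) else 0) + (if t ≤ -w0 - w1 then (1/4:ℝ≥0∞) else 0) := by
  set E : Set Ω := {ω | t ≤ w0 * ε 0 ω + w1 * ε 1 ω} with hE
  have hEmeas : MeasurableSet E :=
    measurableSet_le measurable_const (((hmeas 0).const_mul w0).add ((hmeas 1).const_mul w1))
  have hpre : ∀ (i : Fin 2) (s : ℝ), ε i ⁻¹' {s} = {ω | ε i ω = s} := by
    intro i s; ext ω; simp [Set.mem_preimage]
  have hhalf : ∀ (i : Fin 2) (s : ℝ), s = 1 ∨ s = -1 → μ (ε i ⁻¹' {s}) = 1/2 := by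
    rintro i s (rfl | rfl) <;> rw [hpre]
    · exact (hdist i).1
    · exact (hdist i).2
  have hInd : ProbabilityTheory.IndepFun (ε 0) (ε 1) μ :=
    hindep.indepFun (show (0:Fin 2) ≠ 1 by decide)
  have hquarter : ∀ s0 s1 : ℝ, (s0 = 1 ∨ s0 = -1) → (s1 = 1 ∨ s1 = -1) →
      μ (ε 0 ⁻¹' {s0} ∩ ε 1 ⁻¹' {s1}) = 1/4 := by
    intro s0 s1 h0 h1
    rw [hInd.measure_inter_preimage_eq_mul _ _ (measurableSet_singleton _)
      (measurableSet_singleton _), hhalf 0 s0 h0, hhalf 1 s1 h1, quarter_arith]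
  have hCmeas : ∀ s0 s1 : ℝ, MeasurableSet (ε 0 ⁻¹' {s0} ∩ ε 1 ⁻¹' {s1}) := fun s0 s1 =>
    ((hmeas 0) (measurableSet_singleton _)).inter ((hmeas 1) (measurableSet_singleton _))
  have piece : ∀ s0 s1 : ℝ, (s0 = 1 ∨ s0 = -1) → (s1 = 1 ∨ s1 = -1) →
      μ (E ∩ (ε 0 ⁻¹' {s0} ∩ ε 1 ⁻¹' {s1})) =
        if t ≤ w0 * s0 + w1 * s1 then (1/4:ℝ≥0∞) else 0 := by
    intro s0 s1 h0 h1
    split_ifs with h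
    · rw [Set.inter_eq_right.mpr, hquarter s0 s1 h0 h1]
      rintro ω ⟨hω0, hω1⟩
      simp only [Set.mem_preimage, Set.mem_singleton_iff] at hω0 hω1
      show t ≤ w0 * ε 0 ω + w1 * ε 1 ω
      rw [hω0, hω1]; exact h
    · rw [show E ∩ (ε 0 ⁻¹' {s0} ∩ ε 1 ⁻¹' {s1}) = ∅ from ?_, measure_empty]
      ext ω
      simp only [Set.mem_inter_iff, Set.mem_preimage, Set.mem_singleton_iff,
        Set.mem_empty_iff_false, iff_false, not_and]
      intro hωE hω0 hω1
      exact h (by rw [← hω0, ← hω1]; exact hωE)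
  -- the complement of the four atoms is null
  have hdisj : ∀ i : Fin 2, Disjoint (ε i ⁻¹' {1}) (ε i ⁻¹' ({-1} : Set ℝ)) := by
    intro i
    refine Set.disjoint_left.mpr fun ω h1 h2 => ?_
    simp only [Set.mem_preimage, Set.mem_singleton_iff] at h1 h2
    linarith [h1 ▸ h2]
  have hGnull : ∀ i : Fin 2, μ (ε i ⁻¹' {1} ∪ ε i ⁻¹' {-1})ᶜ = 0 := by
    intro i
    rw [measure_compl (((hmeas i) (measurableSet_singleton _)).union
        ((hmeas i) (measurableSet_singleton _))) (measure_ne_top μ _),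
      measure_union (hdisj i) ((hmeas i) (measurableSet_singleton _)),
      hhalf i 1 (Or.inl rfl), hhalf i (-1) (Or.inr rfl), one_arith]
    simp
  set G : Set Ω := (ε 0 ⁻¹' {1} ∪ ε 0 ⁻¹' {-1}) ∩ (ε 1 ⁻¹' {1} ∪ ε 1 ⁻¹' {-1}) with hG
  have hGc : μ Gᶜ = 0 := by
    rw [hG, Set.compl_inter]
    exact measure_union_null (hGnull 0) (hGnull 1)
  have hEG : μ E = μ (E ∩ G) := (measure_inter_conull hGc).symm
  have hsetsplit : E ∩ G =
      (E ∩ (ε 0 ⁻¹' {1} ∩ ε 1 ⁻¹' {1}) ∪ E ∩ (ε 0 ⁻¹' {1} ∩ ε 1 ⁻¹' {-1}))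
      ∪ (E ∩ (ε 0 ⁻¹' {-1} ∩ ε 1 ⁻¹' {1}) ∪ E ∩ (ε 0 ⁻¹' {-1} ∩ ε 1 ⁻¹' {-1})) := by
    rw [hG]; ext ω
    simp only [Set.mem_inter_iff, Set.mem_union]
    tauto
  have hd01 : ∀ (X Y : Set Ω), X ⊆ ε 0 ⁻¹' {1} → Y ⊆ ε 0 ⁻¹' {-1} → Disjoint X Y :=
    fun X Y hX hY => (hdisj 0).mono hX hY
  have hd11 : ∀ (X Y : Set Ω), X ⊆ ε 1 ⁻¹' {1} → Y ⊆ ε 1 ⁻¹' {-1} → Disjoint X Y :=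
    fun X Y hX hY => (hdisj 1).mono hX hY
  have sub1 : ∀ (s1 : ℝ), E ∩ (ε 0 ⁻¹' {1} ∩ ε 1 ⁻¹' {s1}) ⊆ ε 0 ⁻¹' {1} :=
    fun s1 => (Set.inter_subset_right).trans Set.inter_subset_left
  have sub1' : ∀ (s1 : ℝ), E ∩ (ε 0 ⁻¹' {-1} ∩ ε 1 ⁻¹' {s1}) ⊆ ε 0 ⁻¹' {-1} :=
    fun s1 => (Set.inter_subset_right).trans Set.inter_subset_left
  have hm : ∀ s0 s1 : ℝ, MeasurableSet (E ∩ (ε 0 ⁻¹' {s0} ∩ ε 1 ⁻¹' {s1})) :=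
    fun s0 s1 => hEmeas.inter (hCmeas s0 s1)
  have hmu : μ (E ∩ G) =
      μ (E ∩ (ε 0 ⁻¹' {1} ∩ ε 1 ⁻¹' {1})) + μ (E ∩ (ε 0 ⁻¹' {1} ∩ ε 1 ⁻¹' {-1}))
      + (μ (E ∩ (ε 0 ⁻¹' {-1} ∩ ε 1 ⁻¹' {1})) + μ (E ∩ (ε 0 ⁻¹' {-1} ∩ ε 1 ⁻¹' {-1}))) := by
    rw [hsetsplit, measure_union ?_ ((hm _ _).union (hm _ _)),
      measure_union ?_ (hm _ _), measure_union ?_ (hm _ _)]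
    · exact hd11 _ _ ((Set.inter_subset_right).trans Set.inter_subset_right)
        ((Set.inter_subset_right).trans Set.inter_subset_right)
    · exact hd11 _ _ ((Set.inter_subset_right).trans Set.inter_subset_right)
        ((Set.inter_subset_right).trans Set.inter_subset_right)
    · exact hd01 _ _ (Set.union_subset (sub1 _) (sub1 _))
        (Set.union_subset (sub1' _) (sub1' _))
  rw [hEG, hmu, piece 1 1 (Or.inl rfl) (Or.inl rfl), piece 1 (-1) (Or.inl rfl) (Or.inr rfl),
    piece (-1) 1 (Or.inr rfl) (Or.inl rfl), piece (-1) (-1) (Or.inr rfl) (Or.inr rfl)]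
  simp only [mul_one, mul_neg_one, ← sub_eq_add_neg]
  ring

theorem stmt_7 {Ω : Type*} {m0 : MeasurableSpace Ω} (μ : Measure Ω) [IsProbabilityMeasure μ]
     (ε : Fin 2 → Ω → ℝ)
    (hmeas : ∀ i, Measurable (ε i))
    (hdist : ∀ i, μ {ω | ε i ω = 1} = 1/2 ∧ μ {ω | ε i ω = -1} = 1/2)
    (hindep : ProbabilityTheory.iIndepFun ε μ)
    (t : ℝ) (ht : 0 < t) :
    IsGreatest ((fun w : Fin 2 → ℝ => μ {ω | t ≤ ∑ j, w j * ε j ω}) ''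
        {w | (∀ j, 0 ≤ w j) ∧ ∑ j, w j ^ 2 = 1})
      (max (μ {ω | t ≤ ε 0 ω})
        (μ {ω | t ≤ (1 / Real.sqrt 2) * ε 0 ω + (1 / Real.sqrt 2) * ε 1 ω})) := by
  have key := key_measure μ ε hmeas hdist hindep t
  have hs2 : (0:ℝ) < Real.sqrt 2 := Real.sqrt_pos.mpr (by norm_num)
  have hs2sq : Real.sqrt 2 ^ 2 = 2 := Real.sq_sqrt (by norm_num)
  have hs2one : (1:ℝ) ≤ Real.sqrt 2 := by nlinarith
  have hsum2 : 1 / Real.sqrt 2 + 1 / Real.sqrt 2 = Real.sqrt 2 := by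
    field_simp
    nlinarith
  -- value of the first candidate
  have hv1 : μ {ω | t ≤ ε 0 ω} = (if t ≤ 1 then (1/2:ℝ≥0∞) else 0) := by
    have : {ω | t ≤ ε 0 ω} = {ω | t ≤ 1 * ε 0 ω + 0 * ε 1 ω} := by
      ext ω; simp
    rw [this, key 1 0]
    have h1 : ¬ (t ≤ (-1:ℝ)) := by linarith
    simp only [add_zero, sub_zero, h1, if_false]
    split_ifs
    · exact half_arith
    · exact add_zero 0
  have hv2 : μ {ω | t ≤ (1 / Real.sqrt 2) * ε 0 ω + (1 / Real.sqrt 2) * ε 1 ω} =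
      (if t ≤ Real.sqrt 2 then (1/4:ℝ≥0∞) else 0) := by
    rw [key (1 / Real.sqrt 2) (1 / Real.sqrt 2), hsum2]
    have h1 : ¬ (t ≤ 1 / Real.sqrt 2 - 1 / Real.sqrt 2) := by rw [sub_self]; linarith
    have h2 : ¬ (t ≤ -(1 / Real.sqrt 2) + 1 / Real.sqrt 2) := by rw [neg_add_cancel]; linarith
    have h3 : ¬ (t ≤ -(1 / Real.sqrt 2) - 1 / Real.sqrt 2) := by
      have : 0 < 1 / Real.sqrt 2 := by positivity
      intro h; linarith
    simp only [h1, h2, h3, if_false, add_zero]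
  rw [hv1, hv2]
  constructor
  · -- membership: pick witness by cases
    by_cases h1 : t ≤ 1
    · refine ⟨![1, 0], ⟨fun j => by fin_cases j <;> norm_num, by
        simp [Fin.sum_univ_two]⟩, ?_⟩
      simp only [Fin.sum_univ_two]
      rw [show (![1, 0] : Fin 2 → ℝ) 0 = 1 from rfl, show (![1, 0] : Fin 2 → ℝ) 1 = 0 from rfl,
        key 1 0]
      have hn1 : ¬ (t ≤ (-1:ℝ)) := by linarith
      have h2 : t ≤ Real.sqrt 2 := le_trans h1 hs2one
      simp only [add_zero, sub_zero, h1, if_true, hn1, if_false, h2]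
      rw [half_arith]
      exact (max_eq_left quarter_le_half).symm
    · by_cases h2 : t ≤ Real.sqrt 2
      · refine ⟨![1 / Real.sqrt 2, 1 / Real.sqrt 2], ⟨fun j => by fin_cases j <;> norm_num <;> positivity, by
          simp only [Fin.sum_univ_two]
          rw [show (![1 / Real.sqrt 2, 1 / Real.sqrt 2] : Fin 2 → ℝ) 0 = 1 / Real.sqrt 2 from rfl,
            show (![1 / Real.sqrt 2, 1 / Real.sqrt 2] : Fin 2 → ℝ) 1 = 1 / Real.sqrt 2 from rfl]
          rw [div_pow, one_pow, hs2sq]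
          norm_num⟩, ?_⟩
        simp only [Fin.sum_univ_two]
        rw [show (![1 / Real.sqrt 2, 1 / Real.sqrt 2] : Fin 2 → ℝ) 0 = 1 / Real.sqrt 2 from rfl,
          show (![1 / Real.sqrt 2, 1 / Real.sqrt 2] : Fin 2 → ℝ) 1 = 1 / Real.sqrt 2 from rfl,
          key (1 / Real.sqrt 2) (1 / Real.sqrt 2), hsum2]
        have hn1 : ¬ (t ≤ 1 / Real.sqrt 2 - 1 / Real.sqrt 2) := by rw [sub_self]; linarith
        have hn2 : ¬ (t ≤ -(1 / Real.sqrt 2) + 1 / Real.sqrt 2) := by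
          rw [neg_add_cancel]; linarith
        have hn3 : ¬ (t ≤ -(1 / Real.sqrt 2) - 1 / Real.sqrt 2) := by
          have : 0 < 1 / Real.sqrt 2 := by positivity
          intro h; linarith
        simp only [h1, h2, hn1, hn2, hn3, if_true, if_false, add_zero, zero_add]
        rw [max_eq_right zero_le]
      · refine ⟨![1, 0], ⟨fun j => by fin_cases j <;> norm_num, by
          simp [Fin.sum_univ_two]⟩, ?_⟩
        simp only [Fin.sum_univ_two]
        rw [show (![1, 0] : Fin 2 → ℝ) 0 = 1 from rfl, show (![1, 0] : Fin 2 → ℝ) 1 = 0 from rfl,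
          key 1 0]
        have hn1 : ¬ (t ≤ (-1:ℝ)) := by linarith
        simp only [add_zero, sub_zero, h1, h2, hn1, if_false]
        simp
  · -- upper bound
    rintro x ⟨w, ⟨hw0, hwsum⟩, rfl⟩
    simp only [Fin.sum_univ_two] at hwsum ⊢
    rw [key (w 0) (w 1)]
    set a := w 0 with ha
    set b := w 1 with hb
    have ha0 : 0 ≤ a := hw0 0
    have hb0 : 0 ≤ b := hw0 1
    have hab : a ^ 2 + b ^ 2 = 1 := hwsum
    have ha1 : a ≤ 1 := by nlinarith
    have hb1 : b ≤ 1 := by nlinarith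
    have habs : a + b ≤ Real.sqrt 2 := by nlinarith [sq_nonneg (a - b), sq_nonneg (a + b - Real.sqrt 2)]
    have hneg : ¬ (t ≤ -a - b) := by intro h; linarith
    simp only [hneg, if_false, add_zero]
    by_cases hd1 : t ≤ a - b
    · have ht1 : t ≤ 1 := by linarith
      have hts : t ≤ a + b := by linarith
      have hd2 : ¬ (t ≤ -a + b) := by intro h; linarith
      simp only [hts, hd1, if_true, hd2, if_false, add_zero, ht1]
      rw [half_arith]
      exact le_max_left _ _
    · by_cases hd2 : t ≤ -a + b
      · have ht1 : t ≤ 1 := by linarith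
        have hts : t ≤ a + b := by linarith
        simp only [hts, hd2, if_true, hd1, if_false, add_zero, zero_add, ht1]
        rw [half_arith]
        exact le_max_left _ _
      · simp only [hd1, hd2, if_false, add_zero]
        by_cases hts : t ≤ a + b
        · have ht2 : t ≤ Real.sqrt 2 := le_trans hts habs
          simp only [hts, if_true, ht2]
          exact le_max_right _ _
        · simp only [hts, if_false]
          exact zero_le
end
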